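/- arXiv:0902.0043 — 6 statements merged into one kernel-verified Lean document; each statement's English description precedes it below -/
import Mathlib

section
/- If Δ * A ⊢ holds in the sequent calculus G_β and Δ * ¬A ⊢ holds, where A is the sentence ∀P:o. P (i.e. Π^o(λP:o. P)), then Δ * ¬(∀P:o. P) is derivable in G_β with at most 3 additional proof steps beyond the two given derivations. (That is, ∀P:o. P is 3-cut-strong.) -/
namespace CutSim

inductive Ty : Type
  | o : Ty
  | i : Ty
  | arr : Ty → Ty → Ty
  deriving DecidableEq

inductive Tm : Type
  | var : ℕ → Tm
  | param : ℕ → Ty → Tm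
  | cnot : Tm
  | cor : Tm
  | cpi : Ty → Tm
  | app : Tm → Tm → Tm
  | lam : Ty → Tm → Tm
  deriving DecidableEq

open Ty Tm

/-- negation ¬A -/
def NEG (A : Tm) : Tm := .app .cnot A
/-- disjunction A ∨ B -/
def OR (A B : Tm) : Tm := .app (.app .cor A) B
/-- Π^α F -/
def PI (a : Ty) (F : Tm) : Tm := .app (.cpi a) F
/-- implication A ⇒ B := ¬A ∨ B -/
def IMP (A B : Tm) : Tm := OR (NEG A) B
/-- equivalence A ⟺ B := ¬(¬(A⇒B) ∨ ¬(B⇒A)) -/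
def IFF (A B : Tm) : Tm := NEG (OR (NEG (IMP A B)) (NEG (IMP B A)))

/-- de Bruijn shifting: add d to all variables ≥ c -/
def shift (d c : ℕ) : Tm → Tm
  | .var n => if n < c then .var n else .var (n + d)
  | .param k a => .param k a
  | .cnot => .cnot
  | .cor => .cor
  | .cpi a => .cpi a
  | .app f x => .app (shift d c f) (shift d c x)
  | .lam a b => .lam a (shift d (c+1) b)

/-- capture-avoiding substitution of s for variable k -/
def subst (k : ℕ) (s : Tm) : Tm → Tm
  | .var n => if n = k then shift k 0 s else if k < n then .var (n-1) else .var n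
  | .param m a => .param m a
  | .cnot => .cnot
  | .cor => .cor
  | .cpi a => .cpi a
  | .app f x => .app (subst k s f) (subst k s x)
  | .lam a b => .lam a (subst (k+1) s b)

/-- simple typing relation -/
inductive HasTy : List Ty → Tm → Ty → Prop
  | var {Γ n a} : Γ[n]? = some a → HasTy Γ (.var n) a
  | param {Γ k a} : HasTy Γ (.param k a) a
  | cnot {Γ} : HasTy Γ .cnot (.arr .o .o)
  | cor {Γ} : HasTy Γ .cor (.arr .o (.arr .o .o))
  | cpi {Γ a} : HasTy Γ (.cpi a) (.arr (.arr a .o) .o)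
  | app {Γ f x a b} : HasTy Γ f (.arr a b) → HasTy Γ x a → HasTy Γ (.app f x) b
  | lam {Γ a B b} : HasTy (a :: Γ) B b → HasTy Γ (.lam a B) (.arr a b)

/-- a sentence is a closed formula of type o -/
def Sent (A : Tm) : Prop := HasTy [] A .o

/-- one-step β-reduction -/
inductive Beta : Tm → Tm → Prop
  | beta {a B s} : Beta (.app (.lam a B) s) (subst 0 s B)
  | appl {f f' x} : Beta f f' → Beta (.app f x) (.app f' x)
  | appr {f x x'} : Beta x x' → Beta (.app f x) (.app f x')
  | lam {a b b'} : Beta b b' → Beta (.lam a b) (.lam a b')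

def BetaStar : Tm → Tm → Prop := Relation.ReflTransGen Beta
def IsBetaNormal (A : Tm) : Prop := ∀ B, ¬ Beta A B
/-- B is the β-normal form of A -/
def BetaNF (A B : Tm) : Prop := BetaStar A B ∧ IsBetaNormal B
/-- β-equality (via confluence: common reduct) -/
def BetaEq (A B : Tm) : Prop := ∃ C, BetaStar A C ∧ BetaStar B C

def headIsLogical : Tm → Prop
  | .app f _ => headIsLogical f
  | .cnot => True
  | .cor => True
  | .cpi _ => True
  | _ => False

/-- atomic formula: β-normal, head not a logical constant -/
def Atomic (A : Tm) : Prop := IsBetaNormal A ∧ ¬ headIsLogical A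

def OccursParam (k : ℕ) (a : Ty) : Tm → Prop
  | .param m b => k = m ∧ a = b
  | .app f x => OccursParam k a f ∨ OccursParam k a x
  | .lam _ b => OccursParam k a b
  | _ => False

/-- β-normal sentence -/
def BNSent (C : Tm) : Prop := Sent C ∧ IsBetaNormal C

/-- The sequent calculus G_β, with the number of proof steps as index. -/
inductive Der : Finset Tm → ℕ → Prop
  | init {Δ : Finset Tm} {A} : Atomic A → Der (insert A (insert (NEG A) Δ)) 1
  | negI {Δ : Finset Tm} {A n} : Der (insert A Δ) n → Der (insert (NEG (NEG A)) Δ) (n+1)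
  | orL {Δ : Finset Tm} {A B n m} : Der (insert (NEG A) Δ) n → Der (insert (NEG B) Δ) m →
      Der (insert (NEG (OR A B)) Δ) (n+m+1)
  | orR {Δ : Finset Tm} {A B n} : Der (insert A (insert B Δ)) n → Der (insert (OR A B) Δ) (n+1)
  | piL {Δ : Finset Tm} {a F C D n} : HasTy [] C a → BetaNF (.app F C) D →
      Der (insert (NEG D) Δ) n → Der (insert (NEG (PI a F)) Δ) (n+1)
  | piR {Δ : Finset Tm} {a F c D n} : BetaNF (.app F (.param c a)) D →
      (∀ B ∈ insert (PI a F) Δ, ¬ OccursParam c a B) →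
      Der (insert D Δ) n → Der (insert (PI a F) Δ) (n+1)

/-- A is k-cut-strong for G_β -/
def CutStrong (k : ℕ) (A : Tm) : Prop :=
  ∀ (Δ : Finset Tm) (C : Tm) (n m : ℕ), BNSent C →
    Der (insert C Δ) n → Der (insert (NEG C) Δ) m →
    ∃ s ≤ n + m + k, Der (insert (NEG A) Δ) s

/-- Leibniz equality M ≐^α N := Π^{α→o}(λP. ¬(P M) ∨ (P N)) -/
def leib (a : Ty) (M N : Tm) : Tm :=
  PI (.arr a .o) (.lam (.arr a .o)
    (OR (NEG (.app (.var 0) (shift 1 0 M))) (.app (.var 0) (shift 1 0 N))))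

lemma shift_zero (c : ℕ) (t : Tm) : shift 0 c t = t := by
  induction t generalizing c with
  | var n => simp [shift]
  | _ => simp_all [shift]

/-- ∀P:o. P is 3-cut-strong in G_β -/
theorem stmt0 : CutStrong 3 (PI .o (.lam .o (.var 0))) := by
  intro Δ C n m hC h1 h2
  obtain ⟨hty, hnorm⟩ := hC
  refine ⟨m + 1, by omega, ?_⟩
  refine Der.piL hty ⟨?_, hnorm⟩ h2
  have h := @Beta.beta .o (Tm.var 0) C
  have e : subst 0 C (Tm.var 0) = C := by simp [subst, shift_zero]
  rw [e] at h
  exact Relation.ReflTransGen.single h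

end CutSim
end

section
/- The double-negation inversion rule (from Δ * ¬¬A infer Δ * A) is 0-admissible in G_β: if Δ * ¬¬A is derivable in G_β with a derivation of size n, then Δ * A is derivable in G_β with a derivation of size at most n. -/
namespace CutSim

open Ty Tm

/-! ### Auxiliary material for stmt5 -/

private def tsize : Tm → ℕ
  | .app f x => tsize f + tsize x + 1
  | .lam _ b => tsize b + 1
  | _ => 1

private lemma negneg_ne (A : Tm) : NEG (NEG A) ≠ A := by
  intro h
  have := congrArg tsize h
  simp [NEG, tsize] at this
  omega

private lemma atomic_not_logical {B : Tm} (h : Atomic B) : ¬ headIsLogical B := h.2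

private lemma atomic_ne_negneg {A B : Tm} (h : Atomic B) : B ≠ NEG (NEG A) := by
  intro hEq
  apply h.2
  rw [hEq]
  simp [NEG, headIsLogical]

private lemma neg_atomic_ne_negneg {A B : Tm} (h : Atomic B) : NEG B ≠ NEG (NEG A) := by
  intro hEq
  apply h.2
  have : B = NEG A := by
    simpa [NEG] using hEq
  rw [this]
  simp [NEG, headIsLogical]

private lemma gdecomp {Δ Γ' : Finset Tm} {X A : Tm} (hX : X ≠ NEG (NEG A))
    (hsub : Γ' ⊆ insert X Δ) (hsup : insert X Δ ⊆ insert (NEG (NEG A)) Γ') :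
    Γ' = insert X (Γ' ∩ Δ) := by
  have hXΓ' : X ∈ Γ' := by
    have := hsup (Finset.mem_insert_self X Δ)
    rcases Finset.mem_insert.mp this with h | h
    · exact absurd h hX
    · exact h
  ext x
  simp only [Finset.mem_insert, Finset.mem_inter]
  constructor
  · intro hx
    rcases Finset.mem_insert.mp (hsub hx) with h | h
    · exact Or.inl h
    · exact Or.inr ⟨hx, h⟩
  · rintro (rfl | ⟨hx, _⟩)
    · exact hXΓ'
    · exact hx

private lemma prem_sub {Δ Γ' : Finset Tm} {A X : Tm}
    (hsup : insert X Δ ⊆ insert (NEG (NEG A)) Γ') (Y : Tm) :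
    insert Y Δ ⊆ insert (NEG (NEG A)) (insert Y (Γ' ∩ Δ)) := by
  intro x hx
  rcases Finset.mem_insert.mp hx with rfl | hx
  · exact Finset.mem_insert_of_mem (Finset.mem_insert_self _ _)
  · rcases Finset.mem_insert.mp (hsup (Finset.mem_insert_of_mem hx)) with h | h
    · exact Finset.mem_insert.mpr (Or.inl h)
    · exact Finset.mem_insert_of_mem
        (Finset.mem_insert_of_mem (Finset.mem_inter.mpr ⟨h, hx⟩))

private lemma n2_mem_delta {Δ : Finset Tm} {A X : Tm} (hX : X ≠ NEG (NEG A))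
    (hmem : NEG (NEG A) ∈ insert X Δ) : NEG (NEG A) ∈ Δ := by
  rcases Finset.mem_insert.mp hmem with h | h
  · exact absurd h.symm hX
  · exact h

private lemma main_inv {Γ : Finset Tm} {n : ℕ} (h : Der Γ n) :
    ∀ (A : Tm) (Γ' : Finset Tm), NEG (NEG A) ∈ Γ → Γ' ⊆ Γ →
      Γ ⊆ insert (NEG (NEG A)) Γ' → ∃ m ≤ n, Der (insert A Γ') m := by
  induction h with
  | @init Δ B hB =>
    intro A Γ' hmem hsub hsup
    have hBne : B ≠ NEG (NEG A) := atomic_ne_negneg hB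
    have hNBne : NEG B ≠ NEG (NEG A) := neg_atomic_ne_negneg hB
    have hBΓ' : B ∈ Γ' := by
      rcases Finset.mem_insert.mp (hsup (Finset.mem_insert_self _ _)) with h | h
      · exact absurd h hBne
      · exact h
    have hNBΓ' : NEG B ∈ Γ' := by
      have : NEG B ∈ insert B (insert (NEG B) Δ) :=
        Finset.mem_insert_of_mem (Finset.mem_insert_self _ _)
      rcases Finset.mem_insert.mp (hsup this) with h | h
      · exact absurd h hNBne
      · exact h
    refine ⟨1, le_refl 1, ?_⟩
    have : insert A Γ' = insert B (insert (NEG B) (insert A Γ')) := by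
      rw [Finset.insert_eq_self.mpr (Finset.mem_insert_of_mem hNBΓ'),
        Finset.insert_eq_self.mpr (Finset.mem_insert_of_mem hBΓ')]
    rw [this]
    exact Der.init hB
  | @negI Δ B n hprem ih =>
    intro A Γ' hmem hsub hsup
    by_cases hBA : NEG (NEG B) = NEG (NEG A)
    · have hBA' : B = A := by simpa [NEG] using hBA
      subst hBA'
      by_cases hNΔ : NEG (NEG B) ∈ Δ
      · -- ¬¬B also occurs in Δ; use IH on the premise
        have hΓ'Δ : Γ' ⊆ Δ := by
          intro x hx
          rcases Finset.mem_insert.mp (hsub hx) with h | h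
          · rw [h]; exact hNΔ
          · exact h
        obtain ⟨m, hm, hder⟩ := ih B (insert B Γ')
          (Finset.mem_insert_of_mem hNΔ)
          (Finset.insert_subset_insert _ hΓ'Δ)
          (by
            intro x hx
            rcases Finset.mem_insert.mp hx with rfl | hx
            · exact Finset.mem_insert_of_mem (Finset.mem_insert_self _ _)
            · have : x ∈ insert (NEG (NEG B)) Δ := Finset.mem_insert_of_mem hx
              rcases Finset.mem_insert.mp (hsup this) with h | h
              · exact Finset.mem_insert.mpr (Or.inl h)
              · exact Finset.mem_insert_of_mem (Finset.mem_insert_of_mem h))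
        refine ⟨m, by omega, ?_⟩
        rwa [Finset.insert_idem] at hder
      · by_cases hNΓ' : NEG (NEG B) ∈ Γ'
        · -- Γ' = insert ¬¬B Δ : reapply the rule
          have hΓ'eq : Γ' = insert (NEG (NEG B)) Δ := by
            apply Finset.Subset.antisymm hsub
            intro x hx
            rcases Finset.mem_insert.mp hx with rfl | hx
            · exact hNΓ'
            · rcases Finset.mem_insert.mp
                (hsup (Finset.mem_insert_of_mem hx)) with h | h
              · exact absurd (h ▸ hx) hNΔ
              · exact h
          refine ⟨n + 1, le_refl _, ?_⟩
          rw [hΓ'eq, Finset.insert_comm]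
          exact Der.negI (by rwa [Finset.insert_idem])
        · -- Γ' = Δ : the premise is exactly what we need
          have hΓ'eq : Γ' = Δ := by
            apply Finset.Subset.antisymm
            · intro x hx
              rcases Finset.mem_insert.mp (hsub hx) with h | h
              · exact absurd (h ▸ hx) hNΓ'
              · exact h
            · intro x hx
              rcases Finset.mem_insert.mp
                (hsup (Finset.mem_insert_of_mem hx)) with h | h
              · exact absurd (h ▸ hx) hNΔ
              · exact h
          refine ⟨n, by omega, ?_⟩
          rw [hΓ'eq]
          exact hprem
    · -- principal formula is a side formula
      have hNΔ : NEG (NEG A) ∈ Δ := n2_mem_delta hBA hmem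
      obtain ⟨m, hm, hder⟩ := ih A (insert B (Γ' ∩ Δ))
        (Finset.mem_insert_of_mem hNΔ)
        (Finset.insert_subset_insert _ Finset.inter_subset_right)
        (prem_sub hsup B)
      refine ⟨m + 1, by omega, ?_⟩
      rw [Finset.insert_comm] at hder
      have := Der.negI hder
      rwa [Finset.insert_comm, ← gdecomp hBA hsub hsup] at this
  | @orL Δ P Q n m hp hq ihp ihq =>
    intro A Γ' hmem hsub hsup
    have hne : NEG (OR P Q) ≠ NEG (NEG A) := by simp [NEG, OR]
    have hNΔ : NEG (NEG A) ∈ Δ := n2_mem_delta hne hmem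
    obtain ⟨m₁, hm₁, hder₁⟩ := ihp A (insert (NEG P) (Γ' ∩ Δ))
      (Finset.mem_insert_of_mem hNΔ)
      (Finset.insert_subset_insert _ Finset.inter_subset_right)
      (prem_sub hsup (NEG P))
    obtain ⟨m₂, hm₂, hder₂⟩ := ihq A (insert (NEG Q) (Γ' ∩ Δ))
      (Finset.mem_insert_of_mem hNΔ)
      (Finset.insert_subset_insert _ Finset.inter_subset_right)
      (prem_sub hsup (NEG Q))
    refine ⟨m₁ + m₂ + 1, by omega, ?_⟩
    rw [Finset.insert_comm] at hder₁ hder₂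
    have := Der.orL hder₁ hder₂
    rwa [Finset.insert_comm, ← gdecomp hne hsub hsup] at this
  | @orR Δ P Q n hprem ih =>
    intro A Γ' hmem hsub hsup
    have hne : OR P Q ≠ NEG (NEG A) := by simp [NEG, OR]
    have hNΔ : NEG (NEG A) ∈ Δ := n2_mem_delta hne hmem
    obtain ⟨m, hm, hder⟩ := ih A (insert P (insert Q (Γ' ∩ Δ)))
      (Finset.mem_insert_of_mem (Finset.mem_insert_of_mem hNΔ))
      (Finset.insert_subset_insert _
        (Finset.insert_subset_insert _ Finset.inter_subset_right))
      (by
        intro x hx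
        rcases Finset.mem_insert.mp hx with rfl | hx
        · exact Finset.mem_insert_of_mem (Finset.mem_insert_self _ _)
        · rcases Finset.mem_insert.mp hx with rfl | hx
          · exact Finset.mem_insert_of_mem
              (Finset.mem_insert_of_mem (Finset.mem_insert_self _ _))
          · rcases Finset.mem_insert.mp
              (hsup (Finset.mem_insert_of_mem hx)) with h | h
            · exact Finset.mem_insert.mpr (Or.inl h)
            · exact Finset.mem_insert_of_mem (Finset.mem_insert_of_mem
                (Finset.mem_insert_of_mem (Finset.mem_inter.mpr ⟨h, hx⟩))))
    refine ⟨m + 1, by omega, ?_⟩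
    rw [Finset.insert_comm A P, Finset.insert_comm A Q] at hder
    have := Der.orR hder
    rwa [Finset.insert_comm, ← gdecomp hne hsub hsup] at this
  | @piL Δ a F C D n hC hNF hprem ih =>
    intro A Γ' hmem hsub hsup
    have hne : NEG (PI a F) ≠ NEG (NEG A) := by simp [NEG, PI]
    have hNΔ : NEG (NEG A) ∈ Δ := n2_mem_delta hne hmem
    obtain ⟨m, hm, hder⟩ := ih A (insert (NEG D) (Γ' ∩ Δ))
      (Finset.mem_insert_of_mem hNΔ)
      (Finset.insert_subset_insert _ Finset.inter_subset_right)
      (prem_sub hsup (NEG D))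
    refine ⟨m + 1, by omega, ?_⟩
    rw [Finset.insert_comm] at hder
    have := Der.piL hC hNF hder
    rwa [Finset.insert_comm, ← gdecomp hne hsub hsup] at this
  | @piR Δ a F c D n hNF hfresh hprem ih =>
    intro A Γ' hmem hsub hsup
    have hne : PI a F ≠ NEG (NEG A) := by simp [NEG, PI]
    have hNΔ : NEG (NEG A) ∈ Δ := n2_mem_delta hne hmem
    obtain ⟨m, hm, hder⟩ := ih A (insert D (Γ' ∩ Δ))
      (Finset.mem_insert_of_mem hNΔ)
      (Finset.insert_subset_insert _ Finset.inter_subset_right)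
      (prem_sub hsup D)
    refine ⟨m + 1, by omega, ?_⟩
    rw [Finset.insert_comm] at hder
    have hfresh' : ∀ B ∈ insert (PI a F) (insert A (Γ' ∩ Δ)),
        ¬ OccursParam c a B := by
      intro B hB
      rcases Finset.mem_insert.mp hB with rfl | hB
      · exact hfresh _ (Finset.mem_insert_self _ _)
      · rcases Finset.mem_insert.mp hB with rfl | hB
        · have hN2 := hfresh _ (Finset.mem_insert_of_mem hNΔ)
          intro hOcc
          exact hN2 (by simpa [NEG, OccursParam] using hOcc)
        · exact hfresh _
            (Finset.mem_insert_of_mem (Finset.mem_inter.mp hB).2)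
    have := Der.piR hNF hfresh' hder
    rwa [Finset.insert_comm, ← gdecomp hne hsub hsup] at this

/-- double-negation inversion is 0-admissible in G_β -/
theorem stmt5 (Δ : Finset Tm) (A : Tm) (n : ℕ)
    (h : Der (insert (NEG (NEG A)) Δ) n) :
    ∃ m ≤ n, Der (insert A Δ) m :=
  main_inv h A Δ (Finset.mem_insert_self _ _)
    (Finset.subset_insert _ _) (Finset.Subset.refl _)

end CutSim
end

section
/- Let S be a sequent calculus in which double-negation inversion is admissible. If Φ and Δ are finite sets of sentences and Φ ∪ ¬Δ ∉ Γ_S (where Γ_S is the class of finite sets Ψ with ¬(Ψ↓_β) not derivable in S), then the sequent ¬(Φ↓_β) ∪ Δ↓_β is derivable in S. -/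
namespace CutSim

open Ty Tm

/-- strip a double negation -/
def strip : Tm → Tm
  | .app .cnot (.app .cnot C) => C
  | t => t

lemma betaStar_neg {A C : Tm} (h : BetaStar (NEG A) C) :
    ∃ C', C = NEG C' ∧ BetaStar A C' := by
  induction h with
  | refl => exact ⟨A, rfl, Relation.ReflTransGen.refl⟩
  | tail _ hbc ih =>
      obtain ⟨b', rfl, hb⟩ := ih
      cases hbc with
      | appl h => cases h
      | appr h => exact ⟨_, rfl, hb.tail h⟩

lemma betaNF_neg {A C : Tm} (h : BetaNF (NEG A) C) :
    ∃ C', C = NEG C' ∧ BetaNF A C' := by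
  obtain ⟨hs, hn⟩ := h
  obtain ⟨C', rfl, hb⟩ := betaStar_neg hs
  exact ⟨C', rfl, hb, fun D hD => hn (NEG D) (Beta.appr hD)⟩

/-- B is the negation of the β-normal form of A -/
def NegBNF (A B : Tm) : Prop := ∃ C, BetaNF A C ∧ B = NEG C
/-- Ψ = ¬(Φ↓β) -/
def NegNormSet (Φ Ψ : Finset Tm) : Prop :=
  (∀ A ∈ Φ, ∃ B ∈ Ψ, NegBNF A B) ∧ (∀ B ∈ Ψ, ∃ A ∈ Φ, NegBNF A B)
/-- Φ ∈ Γ_S : the sequent ¬(Φ↓β) is not derivable in S -/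
def InGamma (S : Finset Tm → Prop) (Φ : Finset Tm) : Prop :=
  ∀ Ψ : Finset Tm, NegNormSet Φ Ψ → ¬ S Ψ

/-- Ψ = Φ↓β -/
def NormSet (Φ Ψ : Finset Tm) : Prop :=
  (∀ A ∈ Φ, ∃ B ∈ Ψ, BetaNF A B) ∧ (∀ B ∈ Ψ, ∃ A ∈ Φ, BetaNF A B)

/-- If Φ ∪ ¬Δ ∉ Γ_S then the sequent ¬(Φ↓β) ∪ Δ↓β is derivable in S. -/
theorem stmt8 (S : Finset Tm → Prop)
    (hinv : ∀ (Δ : Finset Tm) A, S (insert (NEG (NEG A)) Δ) → S (insert A Δ))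
    (Φ Δ : Finset Tm) (hΦ : ∀ A ∈ Φ, Sent A) (hΔ : ∀ A ∈ Δ, Sent A)
    (h : ¬ InGamma S (Φ ∪ Δ.image NEG)) :
    ∃ Ψ₁ Ψ₂ : Finset Tm, NegNormSet Φ Ψ₁ ∧ NormSet Δ Ψ₂ ∧ S (Ψ₁ ∪ Ψ₂) := by
  classical
  rw [InGamma] at h
  push_neg at h
  obtain ⟨Ψ, ⟨hN1, hN2⟩, hS⟩ := h
  set Ψ₁ : Finset Tm := Ψ.filter (fun B => ∃ A ∈ Φ, NegBNF A B) with hΨ₁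
  set Ψd : Finset Tm := Ψ.filter (fun B => ∃ A ∈ Δ, NegBNF (NEG A) B) with hΨd
  set Ψ₂ : Finset Tm := Ψd.image strip with hΨ₂
  -- every element of Ψd is a double negation of its strip
  have hdd : ∀ B ∈ Ψd, B = NEG (NEG (strip B)) ∧ ∃ A ∈ Δ, BetaNF A (strip B) := by
    intro B hB
    rw [hΨd, Finset.mem_filter] at hB
    obtain ⟨-, A, hA, C, hC, rfl⟩ := hB
    obtain ⟨C', rfl, hC'⟩ := betaNF_neg hC
    exact ⟨rfl, A, hA, hC'⟩
  -- Ψ is covered by Ψ₁ and Ψd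
  have hcover : ∀ B ∈ Ψ, B ∈ Ψ₁ ∨ B ∈ Ψd := by
    intro B hB
    obtain ⟨A, hA, hAB⟩ := hN2 B hB
    rcases Finset.mem_union.mp hA with hA | hA
    · exact Or.inl (Finset.mem_filter.mpr ⟨hB, A, hA, hAB⟩)
    · obtain ⟨A', hA', rfl⟩ := Finset.mem_image.mp hA
      exact Or.inr (Finset.mem_filter.mpr ⟨hB, A', hA', hAB⟩)
  have hΨ₁sub : Ψ₁ ⊆ Ψ := Finset.filter_subset _ _
  have hΨdsub : Ψd ⊆ Ψ := Finset.filter_subset _ _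
  refine ⟨Ψ₁, Ψ₂, ⟨?_, ?_⟩, ⟨?_, ?_⟩, ?_⟩
  · intro A hA
    obtain ⟨B, hB, hAB⟩ := hN1 A (Finset.mem_union_left _ hA)
    exact ⟨B, Finset.mem_filter.mpr ⟨hB, A, hA, hAB⟩, hAB⟩
  · intro B hB
    rw [hΨ₁, Finset.mem_filter] at hB
    exact hB.2
  · intro A hA
    have : NEG A ∈ Φ ∪ Δ.image NEG :=
      Finset.mem_union_right _ (Finset.mem_image_of_mem _ hA)
    obtain ⟨B, hB, hAB⟩ := hN1 _ this
    have hBd : B ∈ Ψd := Finset.mem_filter.mpr ⟨hB, A, hA, hAB⟩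
    obtain ⟨C, hC, rfl⟩ := hAB
    obtain ⟨C', rfl, hC'⟩ := betaNF_neg hC
    refine ⟨C', ?_, hC'⟩
    have : strip (NEG (NEG C')) = C' := rfl
    exact this ▸ Finset.mem_image_of_mem strip hBd
  · intro B₂ hB₂
    obtain ⟨B, hB, rfl⟩ := Finset.mem_image.mp hB₂
    obtain ⟨-, A, hA, hC⟩ := hdd B hB
    exact ⟨A, hA, hC⟩
  · -- main induction: strip double negations from Ψd one at a time
    have key : ∀ T : Finset Tm, T ⊆ Ψd → S ((Ψ \ (T \ Ψ₁)) ∪ T.image strip) := by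
      intro T
      induction T using Finset.induction_on with
      | empty =>
          intro _
          simpa using hS
      | @insert B T' hBT' ih =>
          intro hsub
          have hBd : B ∈ Ψd := hsub (Finset.mem_insert_self _ _)
          have hT' : T' ⊆ Ψd := fun x hx => hsub (Finset.mem_insert_of_mem hx)
          obtain ⟨hBeq, -⟩ := hdd B hBd
          have hprev := ih hT'
          have hΓ : insert B ((Ψ \ (insert B T' \ Ψ₁)) ∪ T'.image strip) =
              (Ψ \ (T' \ Ψ₁)) ∪ T'.image strip := by
            ext x
            simp only [Finset.mem_insert, Finset.mem_union, Finset.mem_sdiff]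
            constructor
            · rintro (rfl | h)
              · by_cases hx1 : x ∈ Ψ₁
                · exact Or.inl ⟨hΨdsub hBd, fun hc => hc.2 hx1⟩
                · exact Or.inl ⟨hΨdsub hBd, fun hc => hBT' hc.1⟩
              · tauto
            · rintro (⟨hx, hx2⟩ | h)
              · by_cases hxB : x = B
                · exact Or.inl hxB
                · exact Or.inr (Or.inl ⟨hx, fun hc => hx2 ⟨hc.1.resolve_left hxB, hc.2⟩⟩)
              · exact Or.inr (Or.inr h)
          have hstep := hinv ((Ψ \ (insert B T' \ Ψ₁)) ∪ T'.image strip) (strip B)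
          rw [← hBeq, hΓ] at hstep
          have hS' := hstep hprev
          have heq : insert (strip B) ((Ψ \ (insert B T' \ Ψ₁)) ∪ T'.image strip) =
              (Ψ \ (insert B T' \ Ψ₁)) ∪ (insert B T').image strip := by
            rw [Finset.image_insert]
            ext x
            simp only [Finset.mem_insert, Finset.mem_union]
            tauto
          rw [heq] at hS'
          exact hS'
    have hfin := key Ψd (le_refl _)
    have : Ψ \ (Ψd \ Ψ₁) = Ψ₁ := by
      ext x
      simp only [Finset.mem_sdiff]
      constructor
      · rintro ⟨hx, hx2⟩
        rcases hcover x hx with h | h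
        · exact h
        · by_cases hx1 : x ∈ Ψ₁
          · exact hx1
          · exact absurd ⟨h, hx1⟩ hx2
      · intro hx
        exact ⟨hΨ₁sub hx, fun hc => hc.2 hx⟩
    rwa [this] at hfin


end CutSim
end

section
/- Cut-simulation via cut-strong members: let Δ be a sequent containing ¬A for some formula A, and let G_β^{cut} be G_β extended by the unrestricted cut rule (from Δ' * C and Δ' * ¬C infer Δ'), and G_β^{cut_A} be G_β extended by the restricted rule cut_A (from Δ' * C and Δ' * ¬C infer Δ' * ¬A). Then every derivation of Δ in G_β^{cut} with d proof steps can be transformed into a derivation of Δ in G_β^{cut_A} with d proof steps. -/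
namespace CutSim

open Ty Tm

/-- G_β + unrestricted cut; indices: number of proof steps, number of cut applications -/
inductive DerC : Finset Tm → ℕ → ℕ → Prop
  | init {Δ : Finset Tm} {A} : Atomic A → DerC (insert A (insert (NEG A) Δ)) 1 0
  | negI {Δ : Finset Tm} {A n p} : DerC (insert A Δ) n p →
      DerC (insert (NEG (NEG A)) Δ) (n+1) p
  | orL {Δ : Finset Tm} {A B n m p q} : DerC (insert (NEG A) Δ) n p →
      DerC (insert (NEG B) Δ) m q → DerC (insert (NEG (OR A B)) Δ) (n+m+1) (p+q)
  | orR {Δ : Finset Tm} {A B n p} : DerC (insert A (insert B Δ)) n p →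
      DerC (insert (OR A B) Δ) (n+1) p
  | piL {Δ : Finset Tm} {a F C D n p} : HasTy [] C a → BetaNF (.app F C) D →
      DerC (insert (NEG D) Δ) n p → DerC (insert (NEG (PI a F)) Δ) (n+1) p
  | piR {Δ : Finset Tm} {a F c D n p} : BetaNF (.app F (.param c a)) D →
      (∀ B ∈ insert (PI a F) Δ, ¬ OccursParam c a B) →
      DerC (insert D Δ) n p → DerC (insert (PI a F) Δ) (n+1) p
  | cut {Δ : Finset Tm} {C n m p q} : BNSent C → DerC (insert C Δ) n p →
      DerC (insert (NEG C) Δ) m q → DerC Δ (n+m+1) (p+q+1)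

/-- G_β + cut_A; indices: number of proof steps, number of cut_A applications -/
inductive DerCA (A : Tm) : Finset Tm → ℕ → ℕ → Prop
  | init {Δ : Finset Tm} {B} : Atomic B → DerCA A (insert B (insert (NEG B) Δ)) 1 0
  | negI {Δ : Finset Tm} {B n p} : DerCA A (insert B Δ) n p →
      DerCA A (insert (NEG (NEG B)) Δ) (n+1) p
  | orL {Δ : Finset Tm} {B C n m p q} : DerCA A (insert (NEG B) Δ) n p →
      DerCA A (insert (NEG C) Δ) m q → DerCA A (insert (NEG (OR B C)) Δ) (n+m+1) (p+q)
  | orR {Δ : Finset Tm} {B C n p} : DerCA A (insert B (insert C Δ)) n p →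
      DerCA A (insert (OR B C) Δ) (n+1) p
  | piL {Δ : Finset Tm} {a F C D n p} : HasTy [] C a → BetaNF (.app F C) D →
      DerCA A (insert (NEG D) Δ) n p → DerCA A (insert (NEG (PI a F)) Δ) (n+1) p
  | piR {Δ : Finset Tm} {a F c D n p} : BetaNF (.app F (.param c a)) D →
      (∀ B ∈ insert (PI a F) Δ, ¬ OccursParam c a B) →
      DerCA A (insert D Δ) n p → DerCA A (insert (PI a F) Δ) (n+1) p
  | cutA {Δ : Finset Tm} {C n m p q} : BNSent C → DerCA A (insert C Δ) n p →
      DerCA A (insert (NEG C) Δ) m q → DerCA A (insert (NEG A) Δ) (n+m+1) (p+q+1)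

/-! ### Auxiliary: parameter swapping -/

/-- swap two naturals -/
def pswap (c c' k : ℕ) : ℕ := if k = c then c' else if k = c' then c else k

/-- swap parameters c and c' of type a throughout a term -/
def prn (c c' : ℕ) (a : Ty) : Tm → Tm
  | .var n => .var n
  | .param k b => if b = a then .param (pswap c c' k) b else .param k b
  | .cnot => .cnot
  | .cor => .cor
  | .cpi b => .cpi b
  | .app f x => .app (prn c c' a f) (prn c c' a x)
  | .lam b t => .lam b (prn c c' a t)

variable {c c' : ℕ} {a : Ty}

@[simp] lemma pswap_pswap (k : ℕ) : pswap c c' (pswap c c' k) = k := by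
  unfold pswap; split_ifs <;> omega

@[simp] lemma prn_prn (t : Tm) : prn c c' a (prn c c' a t) = t := by
  induction t with
  | param k b => by_cases h : b = a <;> simp [prn, h]
  | app f x ihf ihx => simp [prn, ihf, ihx]
  | lam b t ih => simp [prn, ih]
  | _ => simp [prn]

lemma prn_shift (d j : ℕ) (t : Tm) :
    prn c c' a (shift d j t) = shift d j (prn c c' a t) := by
  induction t generalizing j with
  | var n => simp only [shift, prn]; split_ifs <;> simp [shift, prn, *]
  | param k b => by_cases h : b = a <;> simp [shift, prn, h]
  | app f x ihf ihx => simp [shift, prn, ihf, ihx]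
  | lam b t ih => simp [shift, prn, ih]
  | _ => simp [shift, prn]

lemma prn_subst (s : Tm) (k : ℕ) (t : Tm) :
    prn c c' a (subst k s t) = subst k (prn c c' a s) (prn c c' a t) := by
  induction t generalizing k with
  | var n =>
      simp only [subst, prn]
      split_ifs <;> simp [subst, prn, prn_shift, *]
  | param m b => by_cases h : b = a <;> simp [subst, prn, h]
  | app f x ihf ihx => simp [subst, prn, ihf, ihx]
  | lam b t ih => simp [subst, prn, ih]
  | _ => simp [subst, prn]

lemma prn_beta {t u : Tm} (h : Beta t u) : Beta (prn c c' a t) (prn c c' a u) := by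
  induction h with
  | @beta b B s => simpa [prn, prn_subst] using (Beta.beta : Beta (.app (.lam b (prn c c' a B)) (prn c c' a s)) _)
  | appl _ ih => exact Beta.appl ih
  | appr _ ih => exact Beta.appr ih
  | lam _ ih => exact Beta.lam ih

lemma prn_betastar {t u : Tm} (h : BetaStar t u) :
    BetaStar (prn c c' a t) (prn c c' a u) := by
  unfold BetaStar at h ⊢
  induction h with
  | refl => exact Relation.ReflTransGen.refl
  | tail _ hb ih => exact Relation.ReflTransGen.tail ih (prn_beta hb)

lemma prn_normal {t : Tm} (h : IsBetaNormal t) : IsBetaNormal (prn c c' a t) := by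
  intro B hB
  exact h (prn c c' a B) (by simpa using (prn_beta hB : Beta (prn c c' a (prn c c' a t)) _))

lemma prn_nf {t u : Tm} (h : BetaNF t u) : BetaNF (prn c c' a t) (prn c c' a u) :=
  ⟨prn_betastar h.1, prn_normal h.2⟩

lemma prn_hasty {Γ : List Ty} {t : Tm} {τ : Ty} (h : HasTy Γ t τ) :
    HasTy Γ (prn c c' a t) τ := by
  induction h with
  | var h => exact HasTy.var h
  | @param _ k b =>
      by_cases hb : b = a
      · simpa [prn, hb] using (HasTy.param : HasTy _ (.param (pswap c c' k) b) b)
      · simpa [prn, hb] using (HasTy.param : HasTy _ (.param k b) b)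
  | cnot => exact HasTy.cnot
  | cor => exact HasTy.cor
  | cpi => exact HasTy.cpi
  | app _ _ ihf ihx => exact HasTy.app ihf ihx
  | lam _ ih => exact HasTy.lam ih

lemma prn_head (t : Tm) : headIsLogical (prn c c' a t) ↔ headIsLogical t := by
  induction t with
  | param k b => by_cases h : b = a <;> simp [prn, h, headIsLogical]
  | app f x ihf _ => simpa [prn, headIsLogical] using ihf
  | _ => simp [prn, headIsLogical]

lemma prn_atomic {t : Tm} (h : Atomic t) : Atomic (prn c c' a t) :=
  ⟨prn_normal h.1, fun hh => h.2 ((prn_head t).mp hh)⟩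

lemma prn_bnsent {t : Tm} (h : BNSent t) : BNSent (prn c c' a t) :=
  ⟨prn_hasty h.1, prn_normal h.2⟩

lemma occ_prn {k : ℕ} {b : Ty} {t : Tm} (h : OccursParam k b (prn c c' a t)) :
    OccursParam (if b = a then pswap c c' k else k) b t := by
  induction t with
  | param m e =>
      by_cases he : e = a
      · simp only [prn, he, if_pos rfl, OccursParam] at h
        obtain ⟨hk, hb⟩ := h
        subst hb hk he
        simp [OccursParam]
      · simp only [prn, he, if_neg, OccursParam] at h
        obtain ⟨hk, hb⟩ := h
        subst hb hk
        simp [he, OccursParam]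
  | app f x ihf ihx =>
      simp only [prn, OccursParam] at h
      rcases h with h | h
      · exact Or.inl (ihf h)
      · exact Or.inr (ihx h)
  | lam e t ih =>
      simp only [prn, OccursParam] at h
      exact ih h
  | _ => simp [prn, OccursParam] at h

lemma prn_fix {t : Tm} (h1 : ¬ OccursParam c a t) (h2 : ¬ OccursParam c' a t) :
    prn c c' a t = t := by
  induction t with
  | param m b =>
      by_cases hb : b = a
      · subst hb
        have hc : c ≠ m := fun h => h1 (by simp [OccursParam, h])
        have hc' : c' ≠ m := fun h => h2 (by simp [OccursParam, h])
        simp [prn, pswap, Ne.symm hc, Ne.symm hc']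
      · simp [prn, hb]
  | app f x ihf ihx =>
      simp only [OccursParam, not_or] at h1 h2
      simp [prn, ihf h1.1 h2.1, ihx h1.2 h2.2]
  | lam b t ih =>
      simp only [OccursParam] at h1 h2
      simp [prn, ih h1 h2]
  | _ => simp [prn]

@[simp] lemma prn_NEG (t : Tm) : prn c c' a (NEG t) = NEG (prn c c' a t) := by
  simp [NEG, prn]

@[simp] lemma prn_OR (s t : Tm) : prn c c' a (OR s t) = OR (prn c c' a s) (prn c c' a t) := by
  simp [OR, prn]

@[simp] lemma prn_PI (b : Ty) (t : Tm) : prn c c' a (PI b t) = PI b (prn c c' a t) := by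
  simp [PI, prn]

/-- maximum parameter index occurring in a term -/
def maxP : Tm → ℕ
  | .param k _ => k
  | .app f x => max (maxP f) (maxP x)
  | .lam _ t => maxP t
  | _ => 0

lemma occ_le_maxP {k : ℕ} {b : Ty} {t : Tm} (h : OccursParam k b t) : k ≤ maxP t := by
  induction t with
  | param m e => obtain ⟨hk, _⟩ := h; simp [maxP, hk]
  | app f x ihf ihx =>
      rcases h with h | h
      · exact le_trans (ihf h) (le_max_left _ _)
      · exact le_trans (ihx h) (le_max_right _ _)
  | lam e t ih => exact ih h
  | _ => simp [OccursParam] at h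

/-- renaming parameters preserves `DerC` derivations with the same indices -/
lemma DerC_prn (c c' : ℕ) (a : Ty) {Δ : Finset Tm} {n p : ℕ} (h : DerC Δ n p) :
    DerC (Δ.image (prn c c' a)) n p := by
  induction h with
  | @init Δ B hAt =>
      rw [Finset.image_insert, Finset.image_insert, prn_NEG]
      exact DerC.init (prn_atomic hAt)
  | @negI Δ B n p _ ih =>
      rw [Finset.image_insert] at ih ⊢
      rw [prn_NEG, prn_NEG]
      exact DerC.negI ih
  | @orL Δ B C n m p q _ _ ih1 ih2 =>
      rw [Finset.image_insert] at ih1 ih2 ⊢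
      rw [prn_NEG] at ih1 ih2
      rw [prn_NEG, prn_OR]
      exact DerC.orL ih1 ih2
  | @orR Δ B C n p _ ih =>
      rw [Finset.image_insert, Finset.image_insert] at ih
      rw [Finset.image_insert, prn_OR]
      exact DerC.orR ih
  | @piL Δ b F C D n p hC hNF _ ih =>
      rw [Finset.image_insert, prn_NEG] at ih
      rw [Finset.image_insert, prn_NEG, prn_PI]
      refine DerC.piL (C := prn c c' a C) (prn_hasty hC) ?_ ih
      have := prn_nf (c := c) (c' := c') (a := a) hNF
      simpa [prn] using this
  | @piR Δ b F e D n p hNF hcond _ ih =>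
      rw [Finset.image_insert] at ih
      rw [Finset.image_insert, prn_PI]
      set e' : ℕ := if b = a then pswap c c' e else e with he'
      have hpe : prn c c' a (.param e b) = .param e' b := by
        simp only [prn, he']; split <;> rfl
      refine DerC.piR (F := prn c c' a F) (c := e') ?_ ?_ ih
      · have := prn_nf (c := c) (c' := c') (a := a) hNF
        rw [show prn c c' a (.app F (.param e b))
            = .app (prn c c' a F) (prn c c' a (.param e b)) from rfl, hpe] at this
        exact this
      · intro B hB hOcc
        rw [← prn_PI, ← Finset.image_insert] at hB
        obtain ⟨B0, hB0, rfl⟩ := Finset.mem_image.mp hB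
        have := occ_prn hOcc
        have heq : (if b = a then pswap c c' e' else e') = e := by
          by_cases hb : b = a <;> simp [he', hb]
        rw [heq] at this
        exact hcond B0 hB0 this
  | @cut Δ C n m p q hC _ _ ih1 ih2 =>
      rw [Finset.image_insert] at ih1 ih2
      rw [prn_NEG] at ih2
      exact DerC.cut (prn_bnsent hC) ih1 ih2

/-- main lemma: `¬A` can be carried along any `DerC` derivation, turning cuts into `cut_A`s -/
lemma DerCA_of_DerC (A : Tm) :
    ∀ n, ∀ Δ : Finset Tm, ∀ p, DerC Δ n p → ∃ q, DerCA A (insert (NEG A) Δ) n q := by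
  intro n
  induction n using Nat.strong_induction_on with
  | _ n IH =>
    intro Δ p h
    cases h with
    | @init Δ0 B hAt =>
        refine ⟨0, ?_⟩
        rw [Finset.insert_comm (NEG A) B, Finset.insert_comm (NEG A) (NEG B)]
        exact DerCA.init hAt
    | @negI Δ0 B n0 p0 h' =>
        obtain ⟨q, hq⟩ := IH n0 (by omega) _ _ h'
        rw [Finset.insert_comm (NEG A) B] at hq
        refine ⟨q, ?_⟩
        rw [Finset.insert_comm (NEG A) (NEG (NEG B))]
        exact DerCA.negI hq
    | @orL Δ0 B C n0 m0 p0 q0 h1 h2 =>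
        obtain ⟨q1, hq1⟩ := IH n0 (by omega) _ _ h1
        obtain ⟨q2, hq2⟩ := IH m0 (by omega) _ _ h2
        rw [Finset.insert_comm (NEG A) (NEG B)] at hq1
        rw [Finset.insert_comm (NEG A) (NEG C)] at hq2
        refine ⟨q1 + q2, ?_⟩
        rw [Finset.insert_comm (NEG A) (NEG (OR B C))]
        exact DerCA.orL hq1 hq2
    | @orR Δ0 B C n0 p0 h' =>
        obtain ⟨q, hq⟩ := IH n0 (by omega) _ _ h'
        rw [Finset.insert_comm (NEG A) B, Finset.insert_comm (NEG A) C] at hq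
        refine ⟨q, ?_⟩
        rw [Finset.insert_comm (NEG A) (OR B C)]
        exact DerCA.orR hq
    | @piL Δ0 b F C D n0 p0 hC hNF h' =>
        obtain ⟨q, hq⟩ := IH n0 (by omega) _ _ h'
        rw [Finset.insert_comm (NEG A) (NEG D)] at hq
        refine ⟨q, ?_⟩
        rw [Finset.insert_comm (NEG A) (NEG (PI b F))]
        exact DerCA.piL hC hNF hq
    | @piR Δ0 b F e D n0 p0 hNF hcond h' =>
        -- pick a fresh parameter index M
        set M : ℕ := (insert A (insert (PI b F) Δ0)).sup maxP + 1 with hM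
        have hfresh : ∀ B ∈ insert A (insert (PI b F) Δ0), ¬ OccursParam M b B := by
          intro B hB hOcc
          have h1 : M ≤ maxP B := occ_le_maxP hOcc
          have h2 : maxP B ≤ (insert A (insert (PI b F) Δ0)).sup maxP :=
            Finset.le_sup hB
          omega
        have hfreshF : ¬ OccursParam M b F := by
          intro hOcc
          exact hfresh (PI b F) (by simp) (Or.inr hOcc)
        have heF : ¬ OccursParam e b F := by
          intro hOcc
          exact hcond (PI b F) (by simp) (Or.inr hOcc)
        -- swap e and M in the premise derivation
        have hsw := DerC_prn e M b h'
        rw [Finset.image_insert] at hsw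
        have hΔfix : Δ0.image (prn e M b) = Δ0 := by
          rw [show Δ0 = Δ0.image id by simp]
          rw [Finset.image_id, Finset.image_congr (g := id), Finset.image_id]
          intro B hB
          exact prn_fix (hcond B (Finset.mem_insert_of_mem hB))
            (hfresh B (by simp [Finset.mem_insert_of_mem hB]))
        rw [hΔfix] at hsw
        obtain ⟨q, hq⟩ := IH n0 (by omega) _ _ hsw
        rw [Finset.insert_comm (NEG A)] at hq
        refine ⟨q, ?_⟩
        rw [Finset.insert_comm (NEG A) (PI b F)]
        have hNF' : BetaNF (.app F (.param M b)) (prn e M b D) := by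
          have := prn_nf (c := e) (c' := M) (a := b) hNF
          rw [show prn e M b (.app F (.param e b)) = .app F (.param M b) by
            simp [prn, pswap, prn_fix heF hfreshF]] at this
          exact this
        refine DerCA.piR hNF' ?_ hq
        intro B hB hOcc
        rcases Finset.mem_insert.mp hB with rfl | hB
        · exact hfresh (PI b F) (by simp) hOcc
        rcases Finset.mem_insert.mp hB with rfl | hB
        · exact hfresh A (by simp) (by simpa [NEG, OccursParam] using hOcc)
        · exact hfresh B (by simp [Finset.mem_insert_of_mem hB]) hOcc
    | @cut Δ0 C n0 m0 p0 q0 hC h1 h2 =>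
        obtain ⟨q1, hq1⟩ := IH n0 (by omega) _ _ h1
        obtain ⟨q2, hq2⟩ := IH m0 (by omega) _ _ h2
        rw [Finset.insert_comm (NEG A) C] at hq1
        rw [Finset.insert_comm (NEG A) (NEG C)] at hq2
        exact ⟨q1 + q2 + 1, by simpa [Finset.insert_idem] using DerCA.cutA hC hq1 hq2⟩

/-- cut-simulation: if ¬A ∈ Δ, every derivation of Δ in G_β+cut with d steps becomes
    a derivation of Δ in G_β+cut_A with d steps -/
theorem stmt10 (A : Tm) (hA : BNSent A) (Δ : Finset Tm) (hmem : NEG A ∈ Δ)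
    (d p : ℕ) (h : DerC Δ d p) : ∃ q, DerCA A Δ d q := by
  obtain ⟨q, hq⟩ := DerCA_of_DerC A d Δ p h
  rw [Finset.insert_eq_self.mpr hmem] at hq
  exact ⟨q, hq⟩

end CutSim
end

section
/- If A is a k-cut-strong formula for G_β, then every derivation of a sequent Δ in G_β extended by the rule cut_A (from Δ' * C and Δ' * ¬C infer Δ' * ¬A) with d proof steps and n applications of cut_A can be transformed into a derivation of Δ in plain G_β with at most d + n·k proof steps. -/
namespace CutSim

open Ty Tm

/-- if A is k-cut-strong, cut_A can be eliminated with at most k extra steps per cut -/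
theorem stmt11 (k : ℕ) (A : Tm) (hA : CutStrong k A) (Δ : Finset Tm) (d p : ℕ)
    (h : DerCA A Δ d p) : ∃ s ≤ d + p * k, Der Δ s := by
  induction h with
  | init hB => exact ⟨1, by omega, Der.init hB⟩
  | negI _ ih =>
    obtain ⟨s, hs, hd⟩ := ih
    exact ⟨s+1, by omega, Der.negI hd⟩
  | orL _ _ ih1 ih2 =>
    obtain ⟨s1, hs1, hd1⟩ := ih1
    obtain ⟨s2, hs2, hd2⟩ := ih2
    exact ⟨s1+s2+1, by nlinarith, Der.orL hd1 hd2⟩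
  | orR _ ih =>
    obtain ⟨s, hs, hd⟩ := ih
    exact ⟨s+1, by omega, Der.orR hd⟩
  | piL hC hNF _ ih =>
    obtain ⟨s, hs, hd⟩ := ih
    exact ⟨s+1, by omega, Der.piL hC hNF hd⟩
  | piR hNF hocc _ ih =>
    obtain ⟨s, hs, hd⟩ := ih
    exact ⟨s+1, by omega, Der.piR hNF hocc hd⟩
  | cutA hC _ _ ih1 ih2 =>
    obtain ⟨s1, hs1, hd1⟩ := ih1
    obtain ⟨s2, hs2, hd2⟩ := ih2
    obtain ⟨s, hs, hd⟩ := hA _ _ _ _ hC hd1 hd2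
    exact ⟨s, by nlinarith, hd⟩

end CutSim
end

section
/- The Boolean extensionality axiom B, namely ∀A:o. ∀B:o. (A ⟺ B) ⇒ A ≐^o B, is 14-cut-strong in the sequent calculus G_β: from derivations of Δ * C in n steps and Δ * ¬C in m steps one obtains a derivation of Δ * ¬B in at most n+m+14 steps. -/
namespace CutSim

open Ty Tm

/-- Boolean extensionality axiom: ∀A:o. ∀B:o. (A ⟺ B) ⇒ A ≐^o B -/
def BoolExtAx : Tm :=
  PI .o (.lam .o (PI .o (.lam .o
    (IMP (IFF (.var 1) (.var 0)) (leib .o (.var 1) (.var 0))))))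


/-! ### Auxiliary machinery -/

/-- boolean check that a term is not a lambda -/
def notLam : Tm → Bool
  | .lam _ _ => false
  | _ => true

/-- boolean normal-form checker -/
def nf : Tm → Bool
  | .app f x => notLam f && nf f && nf x
  | .lam _ b => nf b
  | _ => true

lemma beta_nf {A B : Tm} (h : Beta A B) : nf A = false := by
  induction h with
  | beta => simp [nf, notLam]
  | appl _ ih => simp [nf, ih]
  | appr _ ih => simp [nf, ih]
  | lam _ ih => simp [nf, ih]

lemma nf_normal {A : Tm} (h : nf A = true) : IsBetaNormal A :=
  fun B hb => by simp [beta_nf hb] at h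

lemma notLam_false {f : Tm} (h : notLam f = false) : ∃ a b, f = .lam a b := by
  cases f <;> simp [notLam] at h ⊢

lemma nf_progress : ∀ (A : Tm), nf A = false → ∃ B, Beta A B := by
  intro A
  induction A with
  | var n => intro h; simp [nf] at h
  | param k a => intro h; simp [nf] at h
  | cnot => intro h; simp [nf] at h
  | cor => intro h; simp [nf] at h
  | cpi a => intro h; simp [nf] at h
  | app f x ihf ihx =>
    intro h
    simp only [nf, Bool.and_eq_false_iff] at h
    rcases h with (h | h) | h
    · obtain ⟨a, b, rfl⟩ := notLam_false h
      exact ⟨_, Beta.beta⟩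
    · obtain ⟨B, hB⟩ := ihf h
      exact ⟨_, Beta.appl hB⟩
    · obtain ⟨B, hB⟩ := ihx h
      exact ⟨_, Beta.appr hB⟩
  | lam a b ih =>
    intro h
    obtain ⟨B, hB⟩ := ih (by simpa [nf] using h)
    exact ⟨_, Beta.lam hB⟩

lemma normal_nf {A : Tm} (h : IsBetaNormal A) : nf A = true := by
  by_contra hf
  obtain ⟨B, hB⟩ := nf_progress A (by simpa using hf)
  exact h B hB

lemma shift_closed : ∀ {Γ t a}, HasTy Γ t a → ∀ d c, Γ.length ≤ c → shift d c t = t := by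
  intro Γ t a h
  induction h with
  | @var Γ n a hn =>
    intro d c hc
    have hlt : n < Γ.length := by
      by_contra hge
      push_neg at hge
      rw [List.getElem?_eq_none hge] at hn
      cases hn
    simp [shift, Nat.lt_of_lt_of_le hlt hc]
  | param => intros; rfl
  | cnot => intros; rfl
  | cor => intros; rfl
  | cpi => intros; rfl
  | app _ _ ihf ihx => intro d c hc; simp [shift, ihf d c hc, ihx d c hc]
  | lam _ ih =>
    intro d c hc
    simp only [shift, Tm.lam.injEq, true_and]
    exact ih d (c + 1) (by simpa using Nat.succ_le_succ hc)

lemma subst_closed : ∀ {Γ t a}, HasTy Γ t a → ∀ k s, Γ.length ≤ k → subst k s t = t := by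
  intro Γ t a h
  induction h with
  | @var Γ n a hn =>
    intro k s hk
    have hlt : n < Γ.length := by
      by_contra hge
      push_neg at hge
      rw [List.getElem?_eq_none hge] at hn
      cases hn
    have h1 : ¬ (n = k) := by omega
    have h2 : ¬ (k < n) := by omega
    simp [subst, h1, h2]
  | param => intros; rfl
  | cnot => intros; rfl
  | cor => intros; rfl
  | cpi => intros; rfl
  | app _ _ ihf ihx => intro k s hk; simp [subst, ihf k s hk, ihx k s hk]
  | lam _ ih =>
    intro k s hk
    simp only [subst, Tm.lam.injEq, true_and]
    exact ih (k + 1) s (by simpa using Nat.succ_le_succ hk)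

lemma weaken : ∀ {Γ t a}, HasTy Γ t a → ∀ Γ', HasTy (Γ ++ Γ') t a := by
  intro Γ t a h
  induction h with
  | @var Γ n a hn =>
    intro Γ'
    apply HasTy.var
    have hlt : n < Γ.length := by
      by_contra hge
      push_neg at hge
      rw [List.getElem?_eq_none hge] at hn
      cases hn
    rw [List.getElem?_append, if_pos hlt]
    exact hn
  | param => intro Γ'; exact HasTy.param
  | cnot => intro Γ'; exact HasTy.cnot
  | cor => intro Γ'; exact HasTy.cor
  | cpi => intro Γ'; exact HasTy.cpi
  | app _ _ ihf ihx => intro Γ'; exact HasTy.app (ihf Γ') (ihx Γ')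
  | lam _ ih => intro Γ'; exact HasTy.lam (ih Γ')

/-- the parameter `a : o` used for instantiation -/
def pa : Tm := .param 0 .o

def Body2 : Tm := PI .o (.lam .o (IMP (IFF (.var 1) (.var 0)) (leib .o (.var 1) (.var 0))))
def Body3 : Tm := IMP (IFF pa (.var 0)) (leib .o pa (.var 0))
def bod4 : Tm := OR (NEG (.app (.var 0) pa)) (.app (.var 0) pa)

lemma atomic_pa : Atomic pa := ⟨nf_normal rfl, fun h => h⟩

/-- the 7-step derivation of `a ⟺ a` -/
lemma der_iff (Δ : Finset Tm) : Der (insert (IFF pa pa) Δ) 7 := by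
  have i1 : Der (insert pa (insert (NEG pa) Δ)) 1 := Der.init atomic_pa
  have i1' : Der (insert (NEG pa) (insert pa Δ)) 1 := by
    rwa [Finset.insert_comm] at i1
  have i2 : Der (insert (OR (NEG pa) pa) Δ) 2 := Der.orR i1'
  have i3 : Der (insert (NEG (NEG (IMP pa pa))) Δ) 3 := Der.negI i2
  exact Der.orL i3 i3

/-- Boolean extensionality is 14-cut-strong in G_β -/
theorem stmt13 : CutStrong 14 BoolExtAx := by
  intro Δ C n m hC hc hnc
  obtain ⟨hCty, hCnorm⟩ := hC
  -- left branch: ¬¬(a ⟺ a), 8 steps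
  have h5 : Der (insert (NEG (NEG (IFF pa pa))) Δ) 8 := Der.negI (der_iff Δ)
  -- right branch: cut simulation, ¬(a ≐ a) in n+m+3 steps
  have hnn : Der (insert (NEG (NEG C)) Δ) (n + 1) := Der.negI hc
  have horl : Der (insert (NEG (OR (NEG C) C)) Δ) (n + 1 + m + 1) := Der.orL hnn hnc
  set G : Tm := .lam .o C with hGdef
  have hGty : HasTy [] G (.arr .o .o) := HasTy.lam (weaken hCty [.o])
  have hGpa : Beta (.app G pa) C := by
    have hb : Beta (.app (.lam .o C) pa) (subst 0 pa C) := Beta.beta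
    rwa [subst_closed hCty 0 pa (Nat.le_refl 0)] at hb
  have e1 : subst 0 G bod4 = OR (NEG (.app G pa)) (.app G pa) := by
    simp [bod4, OR, NEG, pa, subst, shift_closed hGty 0 0 (Nat.le_refl 0)]
  have hstar : BetaStar (.app (.lam (.arr .o .o) bod4) G) (OR (NEG C) C) := by
    have s1 : Beta (.app (.lam (.arr .o .o) bod4) G)
        (OR (NEG (.app G pa)) (.app G pa)) := e1 ▸ Beta.beta
    have s2 : Beta (OR (NEG (.app G pa)) (.app G pa)) (OR (NEG C) (.app G pa)) :=
      Beta.appl (Beta.appr (Beta.appr hGpa))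
    have s3 : Beta (OR (NEG C) (.app G pa)) (OR (NEG C) C) := Beta.appr hGpa
    exact Relation.ReflTransGen.head s1
      (Relation.ReflTransGen.head s2 (Relation.ReflTransGen.single s3))
  have hnorm : IsBetaNormal (OR (NEG C) C) := by
    apply nf_normal
    simp [OR, NEG, nf, notLam, normal_nf hCnorm]
  have hleq : leib .o pa pa = PI (.arr .o .o) (.lam (.arr .o .o) bod4) := by decide
  have h6 : Der (insert (NEG (leib .o pa pa)) Δ) (n + 1 + m + 1 + 1) := by
    rw [hleq]
    exact Der.piL hGty ⟨hstar, hnorm⟩ horl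
  -- combine with orL
  have h7 : Der (insert (NEG (OR (NEG (IFF pa pa)) (leib .o pa pa))) Δ)
      (8 + (n + 1 + m + 1 + 1) + 1) := Der.orL h5 h6
  -- second Π-instantiation
  have h8 : Der (insert (NEG (PI .o (.lam .o Body3))) Δ)
      (8 + (n + 1 + m + 1 + 1) + 1 + 1) := by
    refine Der.piL (C := pa) HasTy.param ?_ h7
    constructor
    · rw [show OR (NEG (IFF pa pa)) (leib .o pa pa) = subst 0 pa Body3 from by decide]
      exact Relation.ReflTransGen.single Beta.beta
    · exact nf_normal (by decide)
  -- first Π-instantiation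
  have h9 : Der (insert (NEG BoolExtAx) Δ)
      (8 + (n + 1 + m + 1 + 1) + 1 + 1 + 1) := by
    rw [show BoolExtAx = PI .o (.lam .o Body2) from by decide]
    refine Der.piL (C := pa) HasTy.param ?_ h8
    constructor
    · rw [show PI .o (.lam .o Body3) = subst 0 pa Body2 from by decide]
      exact Relation.ReflTransGen.single Beta.beta
    · exact nf_normal (by decide)
  exact ⟨_, by omega, h9⟩

end CutSim
end
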